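/- Let F be a field, q ∈ F with q ≠ 0 and q² ≠ 1. For all integers a, b, p: ([b+p]_q)²·[a−b+2]_q − 2·[b+p]_q·[b+p−1]_q·[a−b+1]_q + ([b+p−1]_q)²·[a−b]_q = [a+b+2p]_q. -/

import Mathlib

noncomputable def qint {F : Type*} [Field F] (q : F) (n : ℤ) : F :=
  (q ^ n - q ^ (-n)) / (q - q⁻¹)

set_option maxHeartbeats 1000000 in
theorem e_alpha0_identity_evenN_boundary {F : Type*} [Field F] (q : F)
    (hq : q ≠ 0) (hq2 : q ^ 2 ≠ 1) (a b p : ℤ) :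
    (qint q (b + p)) ^ 2 * qint q (a - b + 2)
      - 2 * qint q (b + p) * qint q (b + p - 1) * qint q (a - b + 1)
      + (qint q (b + p - 1)) ^ 2 * qint q (a - b)
      = qint q (a + b + 2 * p) := by
  have h1 : q ^ 2 - 1 ≠ 0 := sub_ne_zero.mpr hq2
  have hd : q - q⁻¹ ≠ 0 := by
    intro h
    apply hq2
    have := sub_eq_zero.mp h
    field_simp at this
    linear_combination this
  set w := q ^ (a - b) with hwdef
  set y := q ^ b with hydef
  set z := q ^ p with hzdef
  have hw : w ≠ 0 := zpow_ne_zero _ hq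
  have hy : y ≠ 0 := zpow_ne_zero _ hq
  have hz : z ≠ 0 := zpow_ne_zero _ hq
  have e1 : q ^ (b + p) = y * z := zpow_add₀ hq b p
  have e3 : q ^ (a - b + 2) = w * q ^ 2 := by
    rw [zpow_add₀ hq, ← hwdef, show ((2:ℤ):ℤ) = ((2:ℕ):ℤ) by norm_num, zpow_natCast]
  have e5 : q ^ (b + p - 1) = y * z * q⁻¹ := by
    rw [zpow_sub₀ hq, zpow_add₀ hq, zpow_one, div_eq_mul_inv]
  have e7 : q ^ (a - b + 1) = w * q := by
    rw [zpow_add₀ hq, zpow_one]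
  have e11 : q ^ (a + b + 2 * p) = w * y ^ 2 * z ^ 2 := by
    rw [show a + b + 2 * p = a - b + (b + b) + (p + p) by ring,
      zpow_add₀ hq, zpow_add₀ hq, zpow_add₀ hq, zpow_add₀ hq]
    ring
  have f1 : q ^ (b + p) - q ^ (-(b + p)) = ((y * z) ^ 2 - 1) / (y * z) := by
    rw [zpow_neg, e1]
    field_simp
  have f2 : q ^ (a - b + 2) - q ^ (-(a - b + 2)) = ((w * q ^ 2) ^ 2 - 1) / (w * q ^ 2) := by
    rw [zpow_neg, e3]
    field_simp
  have f3 : q ^ (b + p - 1) - q ^ (-(b + p - 1)) = ((y * z) ^ 2 - q ^ 2) / (y * z * q) := by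
    rw [zpow_neg, e5]
    field_simp
  have f4 : q ^ (a - b + 1) - q ^ (-(a - b + 1)) = ((w * q) ^ 2 - 1) / (w * q) := by
    rw [zpow_neg, e7]
    field_simp
  have f5 : q ^ (a - b) - q ^ (-(a - b)) = (w ^ 2 - 1) / w := by
    rw [zpow_neg, ← hwdef]
    field_simp
  have f6 : q ^ (a + b + 2 * p) - q ^ (-(a + b + 2 * p))
      = ((w * y ^ 2 * z ^ 2) ^ 2 - 1) / (w * y ^ 2 * z ^ 2) := by
    rw [zpow_neg, e11]
    field_simp
  have fu : q - q⁻¹ = (q ^ 2 - 1) / q := by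
    field_simp
  have hS : -(y^2*z^2*q^2*w) + (y^2*z^2*q^4*w*3 - y^2*z^2*q^6*w*3) + y^2*z^2*q^8*w ≠ 0 := by
    have h : -(y^2*z^2*q^2*w) + (y^2*z^2*q^4*w*3 - y^2*z^2*q^6*w*3) + y^2*z^2*q^8*w
        = y^2*z^2*w*q^2*(q^2-1)^3 := by ring
    rw [h]
    exact mul_ne_zero (mul_ne_zero (mul_ne_zero (mul_ne_zero (pow_ne_zero 2 hy)
      (pow_ne_zero 2 hz)) hw) (pow_ne_zero 2 hq)) (pow_ne_zero 3 h1)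
  have hT : y^2*z^2*q^2*w - y^2*z^2*w ≠ 0 := by
    have h : y^2*z^2*q^2*w - y^2*z^2*w = y^2*z^2*w*(q^2-1) := by ring
    rw [h]
    exact mul_ne_zero (mul_ne_zero (mul_ne_zero (pow_ne_zero 2 hy) (pow_ne_zero 2 hz)) hw) h1
  simp only [qint, f1, f2, f3, f4, f5, f6, fu]
  field_simp
  ring
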